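/- Let P : ℝ × ℝ → ℝ be continuously differentiable, and for ρ > 0 and n ∈ ℝ define H(ρ, n) := ρ · ∫_{ζ=1}^{ρ} P(ζ, ζ·n/ρ)/ζ² dζ. Then for every ρ > 0 and every n, the function H is differentiable at (ρ, n) and satisfies the Euler-type identity P(ρ, n) = ρ·∂ρ H(ρ, n) + n·∂ₙ H(ρ, n) − H(ρ, n). -/

import Mathlib

open Set Metric MeasureTheory intervalIntegral Asymptotics Topology Filter
open scoped Interval

private lemma abs_sub_le_of_mem_uIcc {a b x : ℝ} (hx : x ∈ Set.uIcc a b) :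
    |x - a| ≤ |b - a| := by
  have h1 := le_abs_self (b - a)
  have h2 := neg_abs_le (b - a)
  rw [Set.mem_uIcc] at hx
  rw [abs_le]
  rcases hx with ⟨u, v⟩ | ⟨u, v⟩ <;> constructor <;> linarith

lemma biFluid_aux_G_diff (P : ℝ × ℝ → ℝ) (hP : ContDiff ℝ 1 P) {x₀ c₀ : ℝ} (hx : 0 < x₀) :
    DifferentiableAt ℝ (fun q : ℝ × ℝ => ∫ ζ in (1:ℝ)..q.1, P (ζ, ζ * q.2) / ζ ^ 2) (x₀, c₀) := by
  set f : ℝ → ℝ → ℝ := fun c ζ => P (ζ, ζ * c) / ζ ^ 2 with hf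
  -- joint continuity away from ζ = 0
  have hjc : ∀ q : ℝ × ℝ, q.1 ≠ 0 → ContinuousAt (fun q : ℝ × ℝ => f q.2 q.1) q := by
    intro q hq
    apply ContinuousAt.div
    · exact (hP.continuous.comp (continuous_fst.prodMk
        (continuous_fst.mul continuous_snd))).continuousAt
    · exact (continuous_fst.pow 2).continuousAt
    · exact pow_ne_zero 2 hq
  have hc1 : ∀ c : ℝ, ∀ ζ : ℝ, ζ ≠ 0 → ContinuousAt (f c) ζ := by
    intro c ζ hζ
    have h : ContinuousAt ((fun q : ℝ × ℝ => f q.2 q.1) ∘ (fun ζ : ℝ => (ζ, c))) ζ :=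
      ContinuousAt.comp (by exact hjc (ζ, c) hζ)
        ((continuous_id.prodMk continuous_const).continuousAt)
    exact h
  set m : ℝ := min 1 x₀ with hmdef
  have hm : 0 < m := lt_min one_pos hx
  set M : ℝ := max 1 x₀ with hMdef
  have hmM : m ≤ M := min_le_max
  have hM : 0 < M := hm.trans_le hmM
  have huIoc : ∀ ζ ∈ Ι (1:ℝ) x₀, m ≤ ζ ∧ ζ ≤ M := fun ζ hζ =>
    ⟨le_of_lt hζ.1, hζ.2⟩
  have huIcc : ∀ ζ ∈ Set.uIcc (1:ℝ) x₀, 0 < ζ := fun ζ hζ => lt_of_lt_of_le hm hζ.1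
  -- integrability of f c on [1, x₀]
  have hint : ∀ c : ℝ, IntervalIntegrable (f c) volume 1 x₀ := by
    intro c
    apply ContinuousOn.intervalIntegrable
    intro ζ hζ
    exact (hc1 c ζ (ne_of_gt (huIcc ζ hζ))).continuousWithinAt
  -- the parametric part B
  set F' : ℝ → ℝ → ℝ := fun c ζ => (fderiv ℝ P (ζ, ζ * c)) (0, ζ) / ζ ^ 2 with hF'
  set R : ℝ := |c₀| + 1 with hR
  obtain ⟨C, hC⟩ := (IsCompact.exists_bound_of_continuousOn
    ((isCompact_Icc (a := m) (b := M)).prod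
      (isCompact_Icc (a := -(M * R)) (b := M * R)))
    ((hP.continuous_fderiv one_ne_zero).continuousOn))
  set C' : ℝ := max C 0 with hC'
  have hC'0 : 0 ≤ C' := le_max_right _ _
  have hBfull := intervalIntegral.hasDerivAt_integral_of_dominated_loc_of_deriv_le
    (F := f) (F' := F') (a := 1) (b := x₀) (x₀ := c₀) (μ := volume)
    (bound := fun _ => C' * M / m ^ 2) (ball_mem_nhds c₀ one_pos)
    (Filter.Eventually.of_forall (fun c => (ContinuousOn.aestronglyMeasurable
      (fun ζ hζ => (hc1 c ζ (ne_of_gt (hm.trans_le (huIoc ζ hζ).1))).continuousWithinAt)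
      measurableSet_uIoc)))
    (hint c₀)
    (ContinuousOn.aestronglyMeasurable
      (by
        intro ζ hζ
        have hζ0 : (0:ℝ) < ζ := hm.trans_le (huIoc ζ hζ).1
        apply ContinuousWithinAt.div
        · apply Continuous.continuousWithinAt
          exact ((hP.continuous_fderiv one_ne_zero).comp
            (continuous_id.prodMk (continuous_id.mul continuous_const))).clm_apply
            (continuous_const.prodMk continuous_id)
        · exact (continuous_pow 2).continuousWithinAt
        · exact pow_ne_zero 2 (ne_of_gt hζ0))
      measurableSet_uIoc)
    (ae_of_all _ (by
      intro ζ hζ c hc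
      have hmζ : m ≤ ζ := (huIoc ζ hζ).1
      have hζ0 : (0:ℝ) < ζ := hm.trans_le hmζ
      have hζM : ζ ≤ M := (huIoc ζ hζ).2
      have hmem : ((ζ:ℝ), ζ * c) ∈ Set.Icc m M ×ˢ Set.Icc (-(M * R)) (M * R) := by
        constructor
        · exact ⟨hmζ, hζM⟩
        · have hcR : |c| ≤ R := by
            have := mem_ball_iff_norm.1 hc
            rw [Real.norm_eq_abs] at this
            have : |c| - |c₀| ≤ |c - c₀| := abs_sub_abs_le_abs_sub c c₀
            have h2 := mem_ball_iff_norm.1 hc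
            rw [Real.norm_eq_abs] at h2
            rw [hR]; linarith
          have : |ζ * c| ≤ M * R := by
            rw [abs_mul, abs_of_pos hζ0]
            exact mul_le_mul hζM hcR (abs_nonneg c) (le_of_lt hM)
          exact abs_le.1 this
      have hop : ‖fderiv ℝ P (ζ, ζ * c)‖ ≤ C' :=
        le_trans (hC _ hmem) (le_max_left _ _)
      have harg : ‖((0:ℝ), ζ)‖ ≤ M := by
        rw [Prod.norm_def]
        simp only [norm_zero, Real.norm_eq_abs]
        rw [max_eq_right (abs_nonneg ζ)]
        rw [abs_of_pos hζ0]; exact hζM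
      have hnum : ‖(fderiv ℝ P (ζ, ζ * c)) (0, ζ)‖ ≤ C' * M :=
        le_trans ((fderiv ℝ P (ζ, ζ * c)).le_opNorm _)
          (mul_le_mul hop harg (norm_nonneg _) hC'0)
      rw [hF']
      have hz2 : (0:ℝ) < ζ ^ 2 := pow_pos hζ0 2
      have hm2 : m ^ 2 ≤ ζ ^ 2 := pow_le_pow_left₀ (le_of_lt hm) hmζ 2
      have hm2pos : (0:ℝ) < m ^ 2 := pow_pos hm 2
      rw [Real.norm_eq_abs, abs_div, abs_of_pos hz2]
      rw [Real.norm_eq_abs] at hnum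
      exact div_le_div₀ (mul_nonneg hC'0 (le_of_lt hM)) hnum hm2pos hm2))
    (intervalIntegrable_const)
    (ae_of_all _ (by
      intro ζ hζ c hc
      have hζ0 : (0:ℝ) < ζ := hm.trans_le (huIoc ζ hζ).1
      have hγ : HasDerivAt (fun c : ℝ => ((ζ:ℝ), ζ * c)) (0, ζ) c := by
        apply HasDerivAt.prodMk (hasDerivAt_const c ζ)
        simpa using (hasDerivAt_id c).const_mul ζ
      exact (((hP.differentiable one_ne_zero) (ζ, ζ * c)).hasFDerivAt.comp_hasDerivAt c hγ).div_const
        (ζ ^ 2)))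
  obtain ⟨-, hB⟩ := hBfull
  -- the varying-endpoint part A
  have hA : HasFDerivAt (fun p : ℝ × ℝ => ∫ ζ in x₀..p.1, f p.2 ζ)
      ((ContinuousLinearMap.fst ℝ ℝ ℝ).smulRight (f c₀ x₀)) (x₀, c₀) := by
    apply HasFDerivAt.of_isLittleO
    rw [Asymptotics.isLittleO_iff]
    intro ε hε
    have hcF : ContinuousAt (fun q : ℝ × ℝ => f q.2 q.1) (x₀, c₀) := hjc _ (ne_of_gt hx)
    rw [Metric.continuousAt_iff] at hcF
    obtain ⟨δ, hδpos, hδ⟩ := hcF ε hε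
    have hr : 0 < min δ (x₀ / 2) := lt_min hδpos (by linarith)
    filter_upwards [Metric.ball_mem_nhds (x₀, c₀) hr] with p hp
    rw [mem_ball, Prod.dist_eq, max_lt_iff] at hp
    obtain ⟨hp1, hp2⟩ := hp
    rw [Real.dist_eq] at hp1
    have hp1δ : |p.1 - x₀| < δ := lt_of_lt_of_le hp1 (min_le_left _ _)
    have hp2δ : dist p.2 c₀ < δ := lt_of_lt_of_le hp2 (min_le_left _ _)
    have hpos : ∀ ζ ∈ Set.uIcc x₀ p.1, 0 < ζ := by
      intro ζ hζ
      have h1 := abs_sub_le_of_mem_uIcc hζ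
      have h2 : |ζ - x₀| < x₀ / 2 :=
        lt_of_le_of_lt h1 (lt_of_lt_of_le hp1 (min_le_right _ _))
      have h3 := abs_lt.1 h2
      linarith [h3.1]
    have hintp : IntervalIntegrable (f p.2) volume x₀ p.1 := by
      apply ContinuousOn.intervalIntegrable
      intro ζ hζ
      exact (hc1 p.2 ζ (ne_of_gt (hpos ζ hζ))).continuousWithinAt
    have hb : ∀ ζ ∈ Ι x₀ p.1, ‖f p.2 ζ - f c₀ x₀‖ ≤ ε := by
      intro ζ hζ
      have hζu : ζ ∈ Set.uIcc x₀ p.1 := Set.uIoc_subset_uIcc hζ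
      have hd : dist ((ζ:ℝ), p.2) (x₀, c₀) < δ := by
        rw [Prod.dist_eq, max_lt_iff]
        refine ⟨?_, hp2δ⟩
        rw [Real.dist_eq]
        exact lt_of_le_of_lt (abs_sub_le_of_mem_uIcc hζu) hp1δ
      have h5 := hδ hd
      rw [Real.dist_eq] at h5
      rw [Real.norm_eq_abs]
      exact le_of_lt h5
    have hle := intervalIntegral.norm_integral_le_of_norm_le_const hb
    have hcst : ((p.1 - x₀) : ℝ) * f c₀ x₀ = ∫ _ζ in x₀..p.1, f c₀ x₀ := by
      rw [intervalIntegral.integral_const, smul_eq_mul]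
    have hkey : (∫ ζ in x₀..p.1, f p.2 ζ) - (∫ ζ in x₀..x₀, f (x₀, c₀).2 ζ) -
        ((ContinuousLinearMap.fst ℝ ℝ ℝ).smulRight (f c₀ x₀)) (p - (x₀, c₀)) =
        ∫ ζ in x₀..p.1, (f p.2 ζ - f c₀ x₀) := by
      rw [intervalIntegral.integral_same, sub_zero,
        intervalIntegral.integral_sub hintp intervalIntegrable_const,
        intervalIntegral.integral_const]
      simp only [ContinuousLinearMap.smulRight_apply, ContinuousLinearMap.coe_fst',
        Prod.fst_sub, smul_eq_mul]
    rw [hkey]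
    have hfst : |p.1 - x₀| ≤ ‖p - ((x₀:ℝ), c₀)‖ := by
      have h6 := norm_fst_le (p - ((x₀:ℝ), c₀))
      simpa [Real.norm_eq_abs] using h6
    calc ‖∫ ζ in x₀..p.1, (f p.2 ζ - f c₀ x₀)‖ ≤ ε * |p.1 - x₀| := hle
      _ ≤ ε * ‖p - ((x₀:ℝ), c₀)‖ := mul_le_mul_of_nonneg_left hfst hε.le
  have hBF : HasFDerivAt (fun p : ℝ × ℝ => ∫ ζ in (1:ℝ)..x₀, f p.2 ζ)
      ((ContinuousLinearMap.smulRight (1 : ℝ →L[ℝ] ℝ) (∫ ζ in (1:ℝ)..x₀, F' c₀ ζ)).comp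
        (ContinuousLinearMap.snd ℝ ℝ ℝ)) (x₀, c₀) :=
    by have h := hB.hasFDerivAt; exact h.comp (x₀, c₀) (hasFDerivAt_snd (𝕜 := ℝ) (E := ℝ) (F := ℝ) (p := (x₀, c₀)))
  have hsum := hA.add hBF
  have hop : IsOpen {p : ℝ × ℝ | 0 < p.1} := isOpen_lt continuous_const continuous_fst
  have hev : ∀ᶠ p : ℝ × ℝ in nhds (x₀, c₀), 0 < p.1 := hop.mem_nhds hx
  have heq : (fun q : ℝ × ℝ => ∫ ζ in (1:ℝ)..q.1, P (ζ, ζ * q.2) / ζ ^ 2) =ᶠ[nhds (x₀, c₀)]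
      (fun p : ℝ × ℝ => (∫ ζ in x₀..p.1, f p.2 ζ) + ∫ ζ in (1:ℝ)..x₀, f p.2 ζ) := by
    filter_upwards [hev] with p hp
    have h2 : IntervalIntegrable (f p.2) volume x₀ p.1 := by
      apply ContinuousOn.intervalIntegrable
      intro ζ hζ
      have h3 : 0 < ζ := lt_of_lt_of_le (lt_min hx hp) hζ.1
      exact (hc1 p.2 ζ (ne_of_gt h3)).continuousWithinAt
    rw [add_comm]
    exact (intervalIntegral.integral_add_adjacent_intervals (hint p.2) h2).symm
  exact (hsum.congr_of_eventuallyEq heq).differentiableAt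



/-- Euler-type identity for the pressure potential
`H(ρ,n) = ρ·∫_{1}^{ρ} P(ζ, ζ n/ρ)/ζ² dζ`:
for ρ > 0, `H` is differentiable at `(ρ,n)` and
`P(ρ,n) = ρ·∂ρH + n·∂ₙH − H`. -/
theorem biFluid_pressure_potential_euler_identity
    (P : ℝ × ℝ → ℝ) (hP : ContDiff ℝ 1 P)
    (H : ℝ × ℝ → ℝ)
    (hH : ∀ ρ n : ℝ, 0 < ρ →
      H (ρ, n) = ρ * ∫ ζ in (1:ℝ)..ρ, P (ζ, ζ * n / ρ) / ζ ^ 2) :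
    ∀ ρ n : ℝ, 0 < ρ →
      DifferentiableAt ℝ H (ρ, n) ∧
      P (ρ, n) =
        ρ * fderiv ℝ H (ρ, n) (1, 0) + n * fderiv ℝ H (ρ, n) (0, 1) - H (ρ, n) := by
  intro ρ n hρ
  set G : ℝ × ℝ → ℝ := fun q => ∫ ζ in (1:ℝ)..q.1, P (ζ, ζ * q.2) / ζ ^ 2 with hG
  have hGdiff : DifferentiableAt ℝ G (ρ, n / ρ) := biFluid_aux_G_diff P hP hρ
  -- H agrees with p ↦ p.1 * G (p.1, p.2 / p.1) near (ρ, n)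
  have hop : IsOpen {p : ℝ × ℝ | 0 < p.1} := isOpen_lt continuous_const continuous_fst
  have hev : ∀ᶠ p : ℝ × ℝ in nhds (ρ, n), 0 < p.1 := hop.mem_nhds hρ
  have hHeq : H =ᶠ[nhds (ρ, n)] fun p : ℝ × ℝ => p.1 * G (p.1, p.2 / p.1) := by
    filter_upwards [hev] with p hp
    have h1 := hH p.1 p.2 hp
    have h2 : ∀ ζ : ℝ, ζ * p.2 / p.1 = ζ * (p.2 / p.1) := fun ζ => mul_div_assoc ζ p.2 p.1
    simp only [h2] at h1
    exact h1
  have hdivd : DifferentiableAt ℝ (fun p : ℝ × ℝ => p.2 / p.1) (ρ, n) := by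
    have h1 : DifferentiableAt ℝ (fun p : ℝ × ℝ => p.2) (ρ, n) := differentiableAt_snd
    have h2 : DifferentiableAt ℝ (fun p : ℝ × ℝ => p.1) (ρ, n) := differentiableAt_fst
    have h3 : DifferentiableAt ℝ (fun p : ℝ × ℝ => (p.1)⁻¹) (ρ, n) :=
      h2.inv hρ.ne'
    simpa only [div_eq_mul_inv] using h1.fun_mul h3
  have hinner : DifferentiableAt ℝ (fun p : ℝ × ℝ => (p.1, p.2 / p.1)) (ρ, n) :=
    differentiableAt_fst.prodMk hdivd
  have hHhatdiff : DifferentiableAt ℝ (fun p : ℝ × ℝ => p.1 * G (p.1, p.2 / p.1)) (ρ, n) :=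
    differentiableAt_fst.fun_mul (hGdiff.comp (ρ, n) hinner :
      DifferentiableAt ℝ (G ∘ fun p : ℝ × ℝ => (p.1, p.2 / p.1)) (ρ, n))
  have hdiff : DifferentiableAt ℝ H (ρ, n) := hHhatdiff.congr_of_eventuallyEq hHeq
  refine ⟨hdiff, ?_⟩
  set L := fderiv ℝ H (ρ, n) with hL
  -- derivative along the curve λ ↦ (λρ, λn)
  have hγ : HasDerivAt (fun l : ℝ => ((l * ρ : ℝ), (l * n : ℝ))) (ρ, n) 1 :=
    (hasDerivAt_mul_const ρ).prodMk (hasDerivAt_mul_const n)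
  have hdf : HasFDerivAt H L ((1:ℝ) * ρ, (1:ℝ) * n) := by
    rw [hL]
    simpa using hdiff.hasFDerivAt
  have hφ : HasDerivAt (fun l : ℝ => H (l * ρ, l * n)) (L (ρ, n)) 1 :=
    hdf.comp_hasDerivAt 1 hγ
  -- the explicit derivative via FTC
  set u : ℝ → ℝ := fun ζ => P (ζ, ζ * (n / ρ)) / ζ ^ 2 with hu
  have huc : ∀ ζ : ℝ, 0 < ζ → ContinuousAt u ζ := by
    intro ζ hζ
    apply ContinuousAt.div
    · exact (hP.continuous.comp (continuous_id.prodMk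
        (continuous_id.mul continuous_const))).continuousAt
    · exact (continuous_pow 2).continuousAt
    · exact pow_ne_zero 2 hζ.ne'
  set g : ℝ → ℝ := fun x => ∫ ζ in (1:ℝ)..x, u ζ with hgdef
  have hgint : IntervalIntegrable u volume 1 ρ := by
    apply ContinuousOn.intervalIntegrable
    intro ζ hζ
    exact (huc ζ (lt_of_lt_of_le (lt_min one_pos hρ) hζ.1)).continuousWithinAt
  have hmeas : StronglyMeasurableAtFilter u (nhds ρ) volume := by
    refine ContinuousOn.stronglyMeasurableAtFilter isOpen_Ioi ?_ ρ hρ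
    intro ζ hζ
    exact (huc ζ hζ).continuousWithinAt
  have hg' : HasDerivAt g (u ρ) ρ :=
    intervalIntegral.integral_hasDerivAt_right hgint hmeas (huc ρ hρ)
  have hg'' : HasDerivAt (fun l : ℝ => g (l * ρ)) (u ρ * ρ) 1 := by
    have h7 : HasDerivAt g (u ρ) ((1:ℝ) * ρ) := by rwa [one_mul]
    exact HasDerivAt.comp 1 h7 (hasDerivAt_mul_const ρ)
  have hψ : HasDerivAt (fun l : ℝ => (l * ρ) * g (l * ρ)) (ρ * g (1 * ρ) + (1 * ρ) * (u ρ * ρ)) 1 :=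
    (hasDerivAt_mul_const ρ).mul hg''
  -- φ agrees with ψ near 1
  have hev1 : ∀ᶠ l : ℝ in nhds 1, 0 < l := eventually_gt_nhds one_pos
  have hφψ : (fun l : ℝ => H (l * ρ, l * n)) =ᶠ[nhds 1] fun l : ℝ => (l * ρ) * g (l * ρ) := by
    filter_upwards [hev1] with l hl
    have hlρ : 0 < l * ρ := mul_pos hl hρ
    have h1 := hH (l * ρ) (l * n) hlρ
    have h2 : ∀ ζ : ℝ, ζ * (l * n) / (l * ρ) = ζ * (n / ρ) := by
      intro ζ; field_simp
    simp only [h2] at h1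
    exact h1
  have hφ2 : HasDerivAt (fun l : ℝ => H (l * ρ, l * n))
      (ρ * g (1 * ρ) + (1 * ρ) * (u ρ * ρ)) 1 := hψ.congr_of_eventuallyEq hφψ
  have huniq : L (ρ, n) = ρ * g (1 * ρ) + (1 * ρ) * (u ρ * ρ) := hφ.unique hφ2
  -- identify the pieces
  have hgH : ρ * g ρ = H (ρ, n) := by
    rw [hH ρ n hρ]
    congr 1
    apply intervalIntegral.integral_congr
    intro ζ _
    rw [hu]
    simp [mul_div_assoc]
  have huρ : (1 * ρ) * (u ρ * ρ) = P (ρ, n) := by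
    rw [hu]
    have : ρ * (n / ρ) = n := by field_simp
    rw [one_mul]
    simp only [this]
    field_simp
  have hsplit : L (ρ, n) = ρ * L (1, 0) + n * L (0, 1) := by
    have h8 : ((ρ:ℝ), n) = ρ • ((1:ℝ), (0:ℝ)) + n • ((0:ℝ), (1:ℝ)) := by
      simp [Prod.smul_mk, Prod.mk_add_mk]
    rw [h8, map_add, L.map_smul, L.map_smul, smul_eq_mul, smul_eq_mul]
  rw [one_mul] at huniq
  rw [hgH] at huniq
  rw [show ρ * (u ρ * ρ) = P (ρ, n) by rw [← huρ]; ring] at huniq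
  rw [hsplit] at huniq
  linarith
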